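/- Let W > 0 and λ > Λ_*(W)/4, and set a := 1 − √(Λ_*(W)/λ). Then a ∈ (−1,1) and there exists u : ℝ → ℝ that is continuously differentiable on [a,1], twice differentiable on (a,1) with u''(x) = λ/(2·(1+u(x)+W)²) for all x ∈ (a,1), and satisfies u(a) = −1, u'(a) = 0, u(1) = 0, and u(x) > −1 for x ∈ (a,1]. -/

import Mathlib

/-- `φ(r) = √(r(1−r)) + (1−r)^{3/2}·log(1+√r) − (1/2)(1−r)^{3/2}·log(1−r)`. -/
noncomputable def phi (r : ℝ) : ℝ :=
  Real.sqrt (r * (1 - r)) + (1 - r) ^ ((3 : ℝ) / 2) * Real.log (1 + Real.sqrt r)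
    - (1 / 2) * (1 - r) ^ ((3 : ℝ) / 2) * Real.log (1 - r)

/-- `Λ_*(W) = (1+W)³·φ(1/(1+W))²`. -/
noncomputable def LambdaStar (W : ℝ) : ℝ := (1 + W) ^ 3 * (phi (1 / (1 + W))) ^ 2

lemma sq32 {x : ℝ} (hx : 0 < x) : x ^ ((3:ℝ)/2) = x * Real.sqrt x := by
  have h : ((3:ℝ)/2) = 1 + 1/2 := by norm_num
  rw [h, Real.rpow_add hx, Real.rpow_one, Real.sqrt_eq_rpow]

lemma lambdaStar_eq {W : ℝ} (hW : 0 < W) :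
    LambdaStar W = W * (Real.sqrt (1+W)
      + W * (Real.log (Real.sqrt (1+W) + 1) - Real.log (Real.sqrt W)))^2 := by
  have hT : (0:ℝ) < 1 + W := by linarith
  set t := Real.sqrt (1+W) with ht
  set w := Real.sqrt W with hw
  have ht2 : t^2 = 1 + W := Real.sq_sqrt hT.le
  have hw2 : w^2 = W := Real.sq_sqrt hW.le
  have htpos : 0 < t := Real.sqrt_pos.mpr hT
  have hwpos : 0 < w := Real.sqrt_pos.mpr hW
  have h1 : 1 - 1/(1+W) = W/(1+W) := by field_simp; ring
  have hsq1 : Real.sqrt (1/(1+W) * (W/(1+W))) = w/(1+W) := by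
    rw [show 1/(1+W) * (W/(1+W)) = (w/(1+W))^2 by rw [div_pow, hw2]; field_simp,
      Real.sqrt_sq (by positivity)]
  have hsq2 : Real.sqrt (W/(1+W)) = w/t := Real.sqrt_div hW.le _
  have hrpow : (W/(1+W)) ^ ((3:ℝ)/2) = (W/(1+W)) * (w/t) := by
    rw [sq32 (by positivity), hsq2]
  have hsqr : Real.sqrt (1/(1+W)) = 1/t := by
    rw [Real.sqrt_div (by norm_num) _, Real.sqrt_one]
  have hlog1 : Real.log (1 + 1/t) = Real.log (t+1) - Real.log t := by
    rw [show 1 + 1/t = (t+1)/t by field_simp, Real.log_div (by positivity) (ne_of_gt htpos)]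
  have hlog2 : Real.log (W/(1+W)) = 2 * Real.log w - 2 * Real.log t := by
    rw [Real.log_div (ne_of_gt hW) (ne_of_gt hT), ← ht2, ← hw2, Real.log_pow, Real.log_pow]
    push_cast; ring
  unfold LambdaStar phi
  rw [h1, hsq1, hrpow, hsqr, hlog1, hlog2]
  rw [show (1:ℝ) + W = t^2 from ht2.symm, show W = w^2 from hw2.symm]
  field_simp
  ring

set_option maxHeartbeats 1000000 in
/-- Sufficient condition: if `λ > Λ_*(W)/4` and `a = 1 − √(Λ_*(W)/λ)`, then `a ∈ (−1,1)`
and the zipped shooting problem has a solution. -/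
theorem stmt_4 (W lam a : ℝ) (hW : 0 < W) (hlam : LambdaStar W / 4 < lam)
    (hadef : a = 1 - Real.sqrt (LambdaStar W / lam)) :
    a ∈ Set.Ioo (-1 : ℝ) 1 ∧
    ∃ u u' : ℝ → ℝ,
      (∀ x ∈ Set.Icc a 1, HasDerivWithinAt u (u' x) (Set.Icc a 1) x) ∧
      ContinuousOn u' (Set.Icc a 1) ∧
      (∀ x ∈ Set.Ioo a 1, HasDerivAt u' (lam / (2 * (1 + u x + W) ^ 2)) x) ∧
      u a = -1 ∧ u' a = 0 ∧ u 1 = 0 ∧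
      ∀ x ∈ Set.Ioc a 1, u x > -1 := by
  have hT : (0:ℝ) < 1 + W := by linarith
  set G := Real.sqrt (1+W) + W * (Real.log (Real.sqrt (1+W) + 1) - Real.log (Real.sqrt W))
    with hGdef
  have hGpos : 0 < G := by
    have hle : Real.sqrt W ≤ Real.sqrt (1+W) + 1 := by
      have := Real.sqrt_le_sqrt (show W ≤ 1+W by linarith)
      linarith
    have hlog : Real.log (Real.sqrt W) ≤ Real.log (Real.sqrt (1+W) + 1) :=
      Real.log_le_log (Real.sqrt_pos.mpr hW) hle
    have h1 : 0 < Real.sqrt (1+W) := Real.sqrt_pos.mpr hT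
    have h2 : 0 ≤ W * (Real.log (Real.sqrt (1+W) + 1) - Real.log (Real.sqrt W)) :=
      mul_nonneg hW.le (by linarith)
    rw [hGdef]; linarith
  have hLam : LambdaStar W = W * G^2 := lambdaStar_eq hW
  have hΛpos : 0 < LambdaStar W := by rw [hLam]; positivity
  have hlampos : 0 < lam := lt_trans (by positivity) hlam
  have haIoo : a ∈ Set.Ioo (-1 : ℝ) 1 := by
    constructor
    · have h4 : LambdaStar W / lam < 4 := (div_lt_iff₀ hlampos).mpr (by linarith)
      have := (Real.sqrt_lt' (show (0:ℝ) < 2 by norm_num)).mpr (by nlinarith)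
      rw [hadef]; linarith
    · have : 0 < Real.sqrt (LambdaStar W / lam) := Real.sqrt_pos.mpr (by positivity)
      rw [hadef]; linarith
  set k := Real.sqrt W / Real.sqrt lam with hk
  have hkpos : 0 < k := by rw [hk]; positivity
  have hkk : k^2 = W / lam := by
    rw [hk, div_pow, Real.sq_sqrt hW.le, Real.sq_sqrt hlampos.le]
  have hklam : k^2 * lam = W := by rw [hkk]; field_simp
  have hkey : Real.sqrt (LambdaStar W / lam) = k * G := by
    rw [hLam, show W * G^2 / lam = (k*G)^2 by rw [mul_pow, hkk]; ring,
      Real.sqrt_sq (by positivity)]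
  -- the function q s = √(W + s²)
  set q : ℝ → ℝ := fun s => Real.sqrt (W + s^2) with hqdef
  have hqpos : ∀ s, 0 < q s := fun s => Real.sqrt_pos.mpr (by positivity)
  have hq2 : ∀ s, q s ^ 2 = W + s^2 := fun s => Real.sq_sqrt (by positivity)
  have hqW : ∀ s, Real.sqrt W ≤ q s := fun s => Real.sqrt_le_sqrt (by nlinarith)
  have hqgt : ∀ s, -s < q s := by
    intro s
    have h1 : Real.sqrt (s^2) < q s := Real.sqrt_lt_sqrt (sq_nonneg s) (by linarith)
    have h2 : |s| = Real.sqrt (s^2) := (Real.sqrt_sq_eq_abs s).symm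
    calc -s ≤ |s| := neg_le_abs s
    _ = Real.sqrt (s^2) := h2
    _ < q s := h1
  have hqps : ∀ s, 0 < q s + s := fun s => by have := hqgt s; linarith
  have hq' : ∀ s, HasDerivAt q (s / q s) s := by
    intro s
    have hin : HasDerivAt (fun s : ℝ => W + s^2) (2*s) s := by
      simpa using ((hasDerivAt_pow 2 s).const_add W)
    have := (Real.hasDerivAt_sqrt (show W + s^2 ≠ 0 by positivity)).comp s hin
    refine this.congr_deriv ?_
    have hq0 : q s ≠ 0 := ne_of_gt (hqpos s)
    field_simp [hqdef]
    rfl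
  -- the function g
  set g : ℝ → ℝ := fun s => k * (s * q s + W * (Real.log (q s + s) - Real.log (Real.sqrt W)))
    with hgdef
  have hg' : ∀ s, HasDerivAt g (2 * k * q s) s := by
    intro s
    have h1 : HasDerivAt (fun s => s * q s) (1 * q s + s * (s / q s)) s :=
      (hasDerivAt_id s).mul (hq' s)
    have h2 : HasDerivAt (fun s => Real.log (q s + s)) ((s / q s + 1) / (q s + s)) s :=
      HasDerivAt.log ((hq' s).add (hasDerivAt_id s)) (ne_of_gt (hqps s))
    have h2' : HasDerivAt (fun s => Real.log (q s + s) - Real.log (Real.sqrt W))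
        ((s / q s + 1) / (q s + s)) s := h2.sub_const _
    have h3 : HasDerivAt g (k * ((1 * q s + s * (s / q s)) + W * ((s / q s + 1) / (q s + s)))) s :=
      (h1.add (h2'.const_mul W)).const_mul k
    have e1 : (s / q s + 1) / (q s + s) = 1 / q s := by
      have e0 : s / q s + 1 = (q s + s) / q s := by
        rw [add_div, div_self (ne_of_gt (hqpos s))]
        ring
      rw [e0, div_div, mul_comm, ← div_div, div_self (ne_of_gt (hqps s))]
    have hval : k * ((1 * q s + s * (s / q s)) + W * (1 / q s)) = 2 * k * q s := by
      rw [show W = q s ^ 2 - s ^ 2 by rw [hq2]; ring]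
      have hq0 : q s ≠ 0 := ne_of_gt (hqpos s)
      field_simp
      ring
    rw [e1, hval] at h3
    exact h3
  have hcontg : Continuous g := by
    have : Differentiable ℝ g := fun s => (hg' s).differentiableAt
    exact this.continuous
  have hmono : StrictMono g := strictMono_of_deriv_pos (fun s => by
    rw [(hg' s).deriv]; have := hqpos s; positivity)
  -- linear bounds for surjectivity
  have hlow : ∀ s, 0 ≤ s → k * Real.sqrt W * s ≤ g s := by
    intro s hs
    have h1 : Real.sqrt W * s ≤ s * q s := by nlinarith [hqW s]
    have h2 : Real.log (Real.sqrt W) ≤ Real.log (q s + s) :=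
      Real.log_le_log (Real.sqrt_pos.mpr hW) (by nlinarith [hqW s])
    simp only [hgdef]
    have : k * (Real.sqrt W * s) ≤ k * (s * q s + W * (Real.log (q s + s) - Real.log (Real.sqrt W))) := by
      apply mul_le_mul_of_nonneg_left _ hkpos.le
      nlinarith
    linarith [this]
  have hup : ∀ s, s ≤ 0 → g s ≤ k * Real.sqrt W * s := by
    intro s hs
    have h1 : s * q s ≤ Real.sqrt W * s := by nlinarith [hqW s]
    have hqms : Real.sqrt W ≤ q s - s := by have := hqW s; linarith
    have hmulW : (q s + s) * (q s - s) = W := by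
      linear_combination hq2 s
    have h2 : q s + s ≤ Real.sqrt W := by
      nlinarith [hmulW, hqms, Real.sq_sqrt hW.le, hqps s, Real.sqrt_pos.mpr hW]
    have h3 : Real.log (q s + s) ≤ Real.log (Real.sqrt W) :=
      Real.log_le_log (hqps s) h2
    simp only [hgdef]
    have h4 : W * (Real.log (q s + s) - Real.log (Real.sqrt W)) ≤ 0 :=
      mul_nonpos_of_nonneg_of_nonpos hW.le (by linarith)
    have : k * (s * q s + W * (Real.log (q s + s) - Real.log (Real.sqrt W)))
        ≤ k * (Real.sqrt W * s) := by
      apply mul_le_mul_of_nonneg_left _ hkpos.le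
      linarith
    linarith [this]
  have hcoef : 0 < k * Real.sqrt W := by positivity
  have htop : Filter.Tendsto g Filter.atTop Filter.atTop := by
    apply Filter.tendsto_atTop_mono' Filter.atTop
      (Filter.eventually_atTop.mpr ⟨0, hlow⟩)
    simpa using Filter.Tendsto.const_mul_atTop hcoef Filter.tendsto_id
  have hbot : Filter.Tendsto g Filter.atBot Filter.atBot := by
    apply Filter.tendsto_atBot_mono' Filter.atBot
      (Filter.eventually_atBot.mpr ⟨0, hup⟩)
    simpa using Filter.Tendsto.const_mul_atBot hcoef Filter.tendsto_id
  have hsurj : Function.Surjective g := hcontg.surjective htop hbot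
  set e := StrictMono.orderIsoOfSurjective g hmono hsurj with hedef
  have hge : ∀ x, g (e.symm x) = x := fun x => e.apply_symm_apply x
  have hsg : ∀ s, e.symm (g s) = s := fun s => e.symm_apply_apply s
  have hsymm_cont : Continuous (fun y => e.symm y) := (e.symm).continuous
  have hσ0' : ∀ x, HasDerivAt (fun y => e.symm y) (2*k*q (e.symm x))⁻¹ x := fun x =>
    HasDerivAt.of_local_left_inverse hsymm_cont.continuousAt (hg' (e.symm x))
      (by have := hqpos (e.symm x); positivity) (Filter.Eventually.of_forall hge)
  have hσ' : ∀ x, HasDerivAt (fun y => (e.symm (y - a) : ℝ)) ((2*k*q (e.symm (x-a)))⁻¹) x := by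
    intro x
    have := (hσ0' (x-a)).comp x ((hasDerivAt_id x).sub_const a)
    simpa [Function.comp_def] using this
  -- key values of g
  have hg0 : g 0 = 0 := by simp [hgdef, hqdef]
  have hg1 : g 1 = 1 - a := by
    have hq1 : q 1 = Real.sqrt (1+W) := by rw [hqdef]; norm_num; rw [add_comm]
    have : g 1 = k * G := by simp only [hgdef, hGdef]; rw [hq1]; ring
    rw [this, hadef, hkey]; ring
  have he0 : e.symm 0 = 0 := by
    have h := hsg 0; rw [hg0] at h; exact h
  have he1 : e.symm (1 - a) = 1 := by
    have h := hsg 1; rw [hg1] at h; exact h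
  -- the solution
  refine ⟨haIoo, fun x => (e.symm (x-a))^2 - 1,
    fun x => e.symm (x-a) * (k * q (e.symm (x-a)))⁻¹, ?_, ?_, ?_, ?_, ?_, ?_, ?_⟩
  · -- HasDerivWithinAt u (u' x)
    intro x _
    apply HasDerivAt.hasDerivWithinAt
    have h := ((hσ' x).pow 2).sub_const 1
    refine h.congr_deriv ?_
    have h1 := hqpos (e.symm (x-a))
    have h1' : q (e.symm (x-a)) ≠ 0 := ne_of_gt h1
    field_simp
    norm_num
  · -- ContinuousOn u'
    apply Continuous.continuousOn
    have hc1 : Continuous (fun x : ℝ => (e.symm (x-a) : ℝ)) :=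
      hsymm_cont.comp (continuous_id.sub continuous_const)
    have hc2 : Continuous (fun x : ℝ => (k * q (e.symm (x-a)))⁻¹) := by
      simp only [hqdef]
      apply Continuous.inv₀
      · exact continuous_const.mul (Real.continuous_sqrt.comp
          (continuous_const.add (hc1.pow 2)))
      · exact fun x => ne_of_gt (mul_pos hkpos (Real.sqrt_pos.mpr (by positivity)))
    exact hc1.mul hc2
  · -- the ODE
    intro x _
    set s := (e.symm (x-a) : ℝ) with hs
    have hout : HasDerivAt (fun t => t * (k * q t)⁻¹)
        (1 * (k * q s)⁻¹ + s * (-(k * (s / q s)) / (k * q s)^2)) s := by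
      have hkq : HasDerivAt (fun t => k * q t) (k * (s / q s)) s := (hq' s).const_mul k
      have hinv : HasDerivAt (fun t => (k * q t)⁻¹) (-(k * (s / q s)) / (k * q s)^2) s :=
        hkq.inv (by have := hqpos s; positivity)
      exact (hasDerivAt_id s).mul hinv
    have hch := hout.comp x (hσ' x)
    simp only [Function.comp_def] at hch
    refine hch.congr_deriv ?_
    have hq0 : (0:ℝ) < q s := hqpos s
    rw [show 1 + (s^2 - 1) + W = q s ^ 2 by rw [hq2]; ring,
      show lam = (q s ^ 2 - s ^ 2) / k^2 by rw [hq2]; field_simp; linarith [hklam]]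
    rw [← hs]
    field_simp
    ring
  · -- u a = -1
    simp [he0]
  · -- u' a = 0
    simp [he0]
  · -- u 1 = 0
    show (e.symm (1 - a) : ℝ)^2 - 1 = 0
    rw [he1]; norm_num
  · -- u x > -1 on (a, 1]
    intro x hx
    have h1 : (0:ℝ) < x - a := by have := hx.1; linarith
    have h2 : (0:ℝ) < e.symm (x-a) := by
      have := (e.symm).strictMono (show (0:ℝ) < x - a from h1)
      rwa [he0] at this
    show (e.symm (x - a) : ℝ)^2 - 1 > -1
    nlinarith
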